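/- The Milnor number μ = ∑_{i=1}^{h} (e_i - 1)·r_i - n + 1 of an irreducible plane curve singularity is even. -/
import Mathlib

/-- Parity lemma: if `b = gcd a c` then `(a/b - 1) * c ≡ a - b (mod 2)`. -/
lemma key_parity (a b c : ℕ) (hb : b = Nat.gcd a c) :
    (((a / b : ℕ) : ZMod 2) - 1) * (c : ZMod 2) = (a : ZMod 2) - (b : ZMod 2) := by
  have hba : b ∣ a := hb ▸ Nat.gcd_dvd_left a c
  have hbc : b ∣ c := hb ▸ Nat.gcd_dvd_right a c
  have hq : (a / b) * b = a := Nat.div_mul_cancel hba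
  have h2 : a % 2 = 0 → c % 2 = 0 → b % 2 = 0 := by
    intro ha hc
    have : (2 : ℕ) ∣ b := hb ▸ Nat.dvd_gcd (Nat.dvd_of_mod_eq_zero ha)
      (Nat.dvd_of_mod_eq_zero hc)
    omega
  have hba2 : b % 2 = 0 → a % 2 = 0 := by
    intro hb2
    have := (Nat.dvd_of_mod_eq_zero hb2).trans hba
    omega
  have hbc2 : b % 2 = 0 → c % 2 = 0 := by
    intro hb2
    have := (Nat.dvd_of_mod_eq_zero hb2).trans hbc
    omega
  have hmul : ((a / b) % 2 * (b % 2)) % 2 = a % 2 := by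
    rw [← Nat.mul_mod]; rw [hq]
  have ca : (a : ZMod 2) = ((a % 2 : ℕ) : ZMod 2) := (ZMod.natCast_mod a 2).symm
  have cb : (b : ZMod 2) = ((b % 2 : ℕ) : ZMod 2) := (ZMod.natCast_mod b 2).symm
  have cc : (c : ZMod 2) = ((c % 2 : ℕ) : ZMod 2) := (ZMod.natCast_mod c 2).symm
  have cq : ((a / b : ℕ) : ZMod 2) = (((a / b) % 2 : ℕ) : ZMod 2) :=
    (ZMod.natCast_mod _ 2).symm
  rw [ca, cb, cc, cq]
  rcases Nat.mod_two_eq_zero_or_one a with ha | ha <;>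
    rcases Nat.mod_two_eq_zero_or_one b with hb2 | hb2 <;>
    rcases Nat.mod_two_eq_zero_or_one c with hc | hc <;>
    rcases Nat.mod_two_eq_zero_or_one (a / b) with hq2 | hq2 <;>
    simp_all <;> decide

theorem stmt2 (h : ℕ) (r d : ℕ → ℕ) (hh : 1 ≤ h)
    (hrpos : ∀ k, k ≤ h → 0 < r k)
    (hrmono : ∀ k, k ≤ h - 1 → r k < r (k + 1))
    (hd1 : d 1 = r 0)
    (hd : ∀ k, 1 ≤ k → k ≤ h → d (k + 1) = Nat.gcd (d k) (r k))
    (hdh1 : d (h + 1) = 1)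
    (hddec : ∀ k, 1 ≤ k → k ≤ h → d (k + 1) < d k)
    (hstar : ∀ k, 1 ≤ k → k ≤ h - 1 → r k * d k < r (k + 1) * d (k + 1)) :
    Even ((∑ i ∈ Finset.Icc 1 h, (((d i / d (i + 1) : ℕ) : ℤ) - 1) * (r i : ℤ))
      - (r 0 : ℤ) + 1) := by
  set S : ℤ := (∑ i ∈ Finset.Icc 1 h, (((d i / d (i + 1) : ℕ) : ℤ) - 1) * (r i : ℤ))
    - (r 0 : ℤ) + 1 with hS
  have hcast : ((S : ℤ) : ZMod 2) = 0 := by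
    rw [hS]
    simp only [Int.cast_add, Int.cast_sub, Int.cast_one, Int.cast_mul, Int.cast_sum,
      Int.cast_natCast]
    have hsum : (∑ i ∈ Finset.Icc 1 h, (((d i / d (i + 1) : ℕ) : ZMod 2) - 1) * (r i : ZMod 2))
        = ∑ i ∈ Finset.Icc 1 h, ((d i : ZMod 2) - (d (i + 1) : ZMod 2)) := by
      apply Finset.sum_congr rfl
      intro i hi
      rw [Finset.mem_Icc] at hi
      exact key_parity _ _ _ (hd i hi.1 hi.2)
    rw [hsum]
    have htel : ∀ m, 1 ≤ m → (∑ i ∈ Finset.Icc 1 m, ((d i : ZMod 2) - (d (i + 1) : ZMod 2)))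
        = (d 1 : ZMod 2) - (d (m + 1) : ZMod 2) := by
      intro m hm
      induction m with
      | zero => omega
      | succ k ih =>
        rcases Nat.eq_zero_or_pos k with hk | hk
        · subst hk; simp
        · rw [Finset.sum_Icc_succ_top (by omega), ih hk]
          ring
    rw [htel h hh, hd1, hdh1]
    push_cast
    ring
  have hdvd : (2 : ℤ) ∣ S := (ZMod.intCast_zmod_eq_zero_iff_dvd S 2).mp hcast
  exact even_iff_two_dvd.mpr hdvd
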